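/- If a function h analytic on a sector and continuous up to its boundary satisfies |h(z)| ≤ C e^{−2|z|^{1/2} a} on the two boundary rays of the sector with opening angle less than π, and h is bounded in the sector, then |h(z)| ≤ C e^{−2 Re(√(−z)) a}-type exponential decay extends to the interior of the sector (Phragmén–Lindelöf for difference of m-functions): in particular the bound |h(z)| = O(e^{−2|z|^{1/2} a}) holds along the central ray of the sector. -/

import Mathlib

open Complex Real Topology Filter

private lemma arg_aux' {ρ θ : ℝ} (hρ : 0 < ρ) (hθ : θ ∈ Set.Ioc (-π) π) :
    Complex.arg (↑ρ * Complex.exp (↑θ * Complex.I)) = θ := by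
  rw [Complex.exp_mul_I]
  exact Complex.arg_mul_cos_add_sin_mul_I hρ hθ

private lemma exp_decomp' (w : ℂ) :
    Complex.exp w = ↑(Real.exp w.re) * Complex.exp (↑w.im * Complex.I) := by
  rw [Complex.ofReal_exp, ← Complex.exp_add, Complex.re_add_im]

private lemma half_re' (w : ℂ) : (w / 2).re = w.re / 2 := by
  have : (2 : ℂ) = ((2 : ℝ) : ℂ) := by norm_num
  rw [this, Complex.div_ofReal_re]

private lemma half_im' (w : ℂ) : (w / 2).im = w.im / 2 := by
  have : (2 : ℂ) = ((2 : ℝ) : ℂ) := by norm_num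
  rw [this, Complex.div_ofReal_im]

private lemma sqrt_exp' (t : ℝ) : Real.sqrt (Real.exp t) = Real.exp (t / 2) := by
  have h : Real.exp (t / 2) ^ 2 = Real.exp t := by
    rw [sq, ← Real.exp_add]; ring_nf
  rw [← h, Real.sqrt_sq (Real.exp_pos _).le]

/-- Phragmén–Lindelöf for the difference of `m`-functions: if `h` is analytic on a
sector with vertex `E₀ − 1`, symmetry axis the negative real direction, and
half-opening angle `ε < π/2`, is continuous and polynomially bounded on its
closure, and satisfies `|h(z)| ≤ C e^{−2|z−v|^{1/2} a cos(ε/2)}` on the boundary,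
then `|h(z)| = O(e^{−2|z−v|^{1/2} a})` along the central ray. -/
theorem phragmen_lindelof_m_function_difference
    (a : ℝ) (ha : 0 < a) (E₀ : ℝ) (ε : ℝ) (hε : 0 < ε) (hε' : ε < π / 2)
    (h : ℂ → ℂ)
    (S : Set ℂ)
    (hS : S = {z : ℂ | z ≠ ((E₀ - 1 : ℝ) : ℂ) ∧
      |Complex.arg (((E₀ - 1 : ℝ) : ℂ) - z)| < ε})
    (hanal : DifferentiableOn ℂ h S)
    (hcont : ContinuousOn h (closure S))
    (hpoly : ∃ C₁ > (0:ℝ), ∃ n : ℕ, ∀ z ∈ closure S, ‖h z‖ ≤ C₁ * (1 + ‖z‖) ^ n)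
    (C : ℝ) (hC : 0 < C)
    (hbdry : ∀ z ∈ closure S \ S,
      ‖h z‖ ≤ C * Real.exp (-2 * Real.sqrt ‖z - ((E₀ - 1 : ℝ) : ℂ)‖ * a * Real.cos (ε / 2))) :
    ∃ C' > (0:ℝ), ∃ r₀ : ℝ, ∀ r ≥ r₀, r > 0 →
      ‖h (((E₀ - 1 : ℝ) : ℂ) - (r : ℂ))‖ ≤ C' * Real.exp (-2 * Real.sqrt r * a) := by
  obtain ⟨C₁, hC₁, n, hpoly⟩ := hpoly
  set v : ℂ := ((E₀ - 1 : ℝ) : ℂ) with hv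
  have hπ : 0 < π := Real.pi_pos
  have hεπ : ε < π := by linarith
  -- membership in S
  have hmemS : ∀ ρ θ : ℝ, 0 < ρ → |θ| < ε → v - ↑ρ * Complex.exp (↑θ * Complex.I) ∈ S := by
    intro ρ θ hρ hθ
    obtain ⟨hθ1, hθ2⟩ := abs_lt.1 hθ
    rw [hS]
    refine ⟨fun hcon => ?_, ?_⟩
    · exact (mul_ne_zero (Complex.ofReal_ne_zero.2 hρ.ne') (Complex.exp_ne_zero _))
        (sub_eq_self.1 hcon)
    · show |Complex.arg (v - (v - ↑ρ * Complex.exp (↑θ * Complex.I)))| < ε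
      rw [sub_sub_cancel, arg_aux' hρ ⟨by linarith, by linarith⟩]
      exact hθ
  -- membership in closure S
  have hmemCl : ∀ ρ θ : ℝ, 0 < ρ → |θ| ≤ ε → v - ↑ρ * Complex.exp (↑θ * Complex.I) ∈ closure S := by
    intro ρ θ hρ hθ
    rcases lt_or_eq_of_le hθ with hθ | hθabs
    · exact subset_closure (hmemS ρ θ hρ hθ)
    · have hθ0 : θ ≠ 0 := by
        intro h0; rw [h0] at hθabs; simp at hθabs; linarith
      have h1 : Filter.Tendsto (fun k : ℕ => θ * ((k : ℝ) / (k + 1))) Filter.atTop (𝓝 θ) := by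
        have := (tendsto_natCast_div_add_atTop (1 : ℝ)).const_mul θ
        simpa using this
      have h2 : Continuous (fun t : ℝ => v - ↑ρ * Complex.exp (↑t * Complex.I)) := by
        continuity
      refine mem_closure_of_tendsto ((h2.tendsto θ).comp h1)
        (Filter.Eventually.of_forall fun k => ?_)
      apply hmemS ρ _ hρ
      rw [abs_mul, _root_.abs_of_nonneg (by positivity : (0:ℝ) ≤ (k : ℝ) / (k + 1))]
      calc |θ| * ((k : ℝ) / (k + 1)) < |θ| * 1 := by
            apply mul_lt_mul_of_pos_left _ (abs_pos.2 hθ0)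
            rw [div_lt_one (by positivity)]; linarith
        _ = ε := by rw [mul_one, hθabs]
  have mapsS : ∀ w : ℂ, w.im ∈ Set.Ioo (-ε) ε → v - Complex.exp w ∈ S := by
    intro w hw
    rw [exp_decomp' w]
    exact hmemS _ _ (Real.exp_pos _) (abs_lt.2 ⟨hw.1, hw.2⟩)
  have mapsCl : ∀ w : ℂ, w.im ∈ Set.Icc (-ε) ε → v - Complex.exp w ∈ closure S := by
    intro w hw
    rw [exp_decomp' w]
    exact hmemCl _ _ (Real.exp_pos _) (abs_le.2 ⟨hw.1, hw.2⟩)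
  set G : ℂ → ℂ := fun w => h (v - Complex.exp w) * Complex.exp (2 * ↑a * Complex.exp (w / 2))
    with hG
  -- norm of the multiplier
  have hnorm2 : ∀ w : ℂ, ‖Complex.exp (2 * ↑a * Complex.exp (w / 2))‖
      = Real.exp (2 * a * (Real.exp (w.re / 2) * Real.cos (w.im / 2))) := by
    intro w
    rw [Complex.norm_exp]
    congr 1
    rw [show (2 * (a : ℂ) * Complex.exp (w / 2)) = ((2 * a : ℝ) : ℂ) * Complex.exp (w / 2) by
      push_cast; ring]
    rw [Complex.re_ofReal_mul, Complex.exp_re, half_re' w, half_im' w]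
  have hGnorm : ∀ w : ℂ, ‖G w‖
      = ‖h (v - Complex.exp w)‖ * Real.exp (2 * a * (Real.exp (w.re / 2) * Real.cos (w.im / 2))) := by
    intro w
    rw [hG]
    simp only [norm_mul]
    rw [hnorm2]
  -- boundary bound
  have hGbd : ∀ w : ℂ, |w.im| = ε → ‖G w‖ ≤ C := by
    intro w hw
    have hz : v - Complex.exp w ∈ closure S \ S := by
      constructor
      · exact mapsCl w (abs_le.1 hw.le)
      · rw [hS]
        intro hcon
        have harg : Complex.arg (v - (v - Complex.exp w)) = w.im := by
          rw [sub_sub_cancel, exp_decomp' w]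
          have := abs_le.1 hw.le
          exact arg_aux' (Real.exp_pos _) ⟨by linarith, by linarith⟩
        have := hcon.2
        rw [harg] at this
        rw [hw] at this
        exact lt_irrefl _ this
    have hb := hbdry _ hz
    have hzv : ‖(v - Complex.exp w) - v‖ = Real.exp w.re := by
      rw [sub_sub_cancel_left, norm_neg, Complex.norm_exp]
    rw [hzv, sqrt_exp'] at hb
    have hcos : Real.cos (w.im / 2) = Real.cos (ε / 2) := by
      rw [← Real.cos_abs, abs_div, hw, abs_of_pos (by norm_num : (0:ℝ) < 2)]
    rw [hGnorm, hcos]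
    calc ‖h (v - Complex.exp w)‖ * Real.exp (2 * a * (Real.exp (w.re / 2) * Real.cos (ε / 2)))
        ≤ (C * Real.exp (-2 * Real.exp (w.re / 2) * a * Real.cos (ε / 2)))
            * Real.exp (2 * a * (Real.exp (w.re / 2) * Real.cos (ε / 2))) := by
          apply mul_le_mul_of_nonneg_right hb (Real.exp_pos _).le
      _ = C := by
          rw [mul_assoc, ← Real.exp_add]
          ring_nf
          rw [Real.exp_zero, mul_one]
  -- growth bound in the strip
  have hGrow : ∀ w : ℂ, w.im ∈ Set.Ioo (-ε) ε →
      ‖G w‖ ≤ (C₁ * (2 + ‖v‖) ^ n) * Real.exp (((n : ℝ) + 2 * a) * Real.exp (1 * |w.re|)) := by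
    intro w hw
    have hzcl : v - Complex.exp w ∈ closure S := subset_closure (mapsS w hw)
    have hp := hpoly _ hzcl
    have hE : Real.exp (w.re / 2) ≤ Real.exp |w.re| :=
      Real.exp_le_exp.2 (by linarith [le_abs_self w.re, abs_nonneg w.re])
    have habs : |w.re| ≤ Real.exp |w.re| := (Real.add_one_le_exp _).trans' (by linarith [abs_nonneg w.re])
    have hzb : 1 + ‖v - Complex.exp w‖ ≤ (2 + ‖v‖) * Real.exp |w.re| := by
      have h1 : ‖v - Complex.exp w‖ ≤ ‖v‖ + Real.exp w.re := by
        calc ‖v - Complex.exp w‖ ≤ ‖v‖ + ‖Complex.exp w‖ := norm_sub_le _ _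
          _ = ‖v‖ + Real.exp w.re := by simp [Complex.norm_exp]
      have h2 : Real.exp w.re ≤ Real.exp |w.re| := Real.exp_le_exp.2 (le_abs_self _)
      have h3 : (1 : ℝ) ≤ Real.exp |w.re| := Real.one_le_exp (abs_nonneg _)
      nlinarith [norm_nonneg v]
    have hcosle : Real.cos (w.im / 2) ≤ 1 := Real.cos_le_one _
    rw [hGnorm]
    calc ‖h (v - Complex.exp w)‖ * Real.exp (2 * a * (Real.exp (w.re / 2) * Real.cos (w.im / 2)))
        ≤ (C₁ * (1 + ‖v - Complex.exp w‖) ^ n) * Real.exp (2 * a * Real.exp |w.re|) := by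
          apply mul_le_mul hp _ (Real.exp_pos _).le
            (by positivity)
          apply Real.exp_le_exp.2
          calc 2 * a * (Real.exp (w.re / 2) * Real.cos (w.im / 2))
              ≤ 2 * a * (Real.exp (w.re / 2) * 1) := by
                apply mul_le_mul_of_nonneg_left _ (by positivity)
                exact mul_le_mul_of_nonneg_left hcosle (Real.exp_pos _).le
            _ = 2 * a * Real.exp (w.re / 2) := by ring
            _ ≤ 2 * a * Real.exp |w.re| := mul_le_mul_of_nonneg_left hE (by positivity)
      _ ≤ (C₁ * ((2 + ‖v‖) * Real.exp |w.re|) ^ n) * Real.exp (2 * a * Real.exp |w.re|) := by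
          apply mul_le_mul_of_nonneg_right _ (Real.exp_pos _).le
          apply mul_le_mul_of_nonneg_left _ hC₁.le
          exact pow_le_pow_left₀ (by positivity) hzb n
      _ = (C₁ * (2 + ‖v‖) ^ n) * (Real.exp ((n : ℝ) * |w.re|) * Real.exp (2 * a * Real.exp |w.re|)) := by
          rw [mul_pow, ← Real.exp_nat_mul]
          ring
      _ ≤ (C₁ * (2 + ‖v‖) ^ n) * Real.exp (((n : ℝ) + 2 * a) * Real.exp (1 * |w.re|)) := by
          apply mul_le_mul_of_nonneg_left _ (by positivity)
          rw [← Real.exp_add, one_mul]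
          apply Real.exp_le_exp.2
          have : (n : ℝ) * |w.re| ≤ (n : ℝ) * Real.exp |w.re| :=
            mul_le_mul_of_nonneg_left habs (Nat.cast_nonneg n)
          linarith
  -- differentiability
  have hGd : DiffContOnCl ℂ G (Complex.im ⁻¹' Set.Ioo (-ε) ε) := by
    constructor
    · apply DifferentiableOn.mul
      · exact hanal.comp
          ((differentiable_const v).sub Complex.differentiable_exp).differentiableOn
          (fun w hw => mapsS w hw)
      · exact (Complex.differentiable_exp.comp ((differentiable_const (2 * (a : ℂ))).mul
          (Complex.differentiable_exp.comp (differentiable_id.div_const 2)))).differentiableOn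
    · have hcl : closure (Complex.im ⁻¹' Set.Ioo (-ε) ε) ⊆ Complex.im ⁻¹' Set.Icc (-ε) ε :=
        closure_minimal (fun w hw => Set.Ioo_subset_Icc_self hw)
          (isClosed_Icc.preimage Complex.continuous_im)
      apply ContinuousOn.mono _ hcl
      apply ContinuousOn.mul
      · exact hcont.comp ((continuous_const.sub Complex.continuous_exp).continuousOn)
          (fun w hw => mapsCl w hw)
      · exact (Complex.continuous_exp.comp (continuous_const.mul
          (Complex.continuous_exp.comp (continuous_id.div_const 2)))).continuousOn
  -- apply Phragmen-Lindelof
  have key : ∀ w : ℂ, -ε ≤ w.im → w.im ≤ ε → ‖G w‖ ≤ C := by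
    intro w h1 h2
    apply PhragmenLindelof.horizontal_strip hGd ?_ ?_ ?_ h1 h2
    · refine ⟨1, ?_, (n : ℝ) + 2 * a, ?_⟩
      · rw [show ε - -ε = 2 * ε by ring]
        rw [lt_div_iff₀ (by positivity)]
        linarith
      · apply Asymptotics.IsBigO.of_bound (C₁ * (2 + ‖v‖) ^ n)
        rw [Filter.eventually_inf_principal]
        apply Filter.Eventually.of_forall
        intro w hw
        rw [Real.norm_eq_abs, Real.abs_exp]
        exact hGrow w hw
    · intro z hz
      exact hGbd z (by rw [hz, abs_neg, abs_of_pos hε])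
    · intro z hz
      exact hGbd z (by rw [hz, abs_of_pos hε])
  -- conclude
  refine ⟨C, hC, 0, fun r _ hr => ?_⟩
  have hkey := key ((Real.log r : ℝ) : ℂ) (by simp only [Complex.ofReal_im]; linarith) (by simp only [Complex.ofReal_im]; linarith)
  have h1 : Complex.exp ((Real.log r : ℝ) : ℂ) = (r : ℂ) := by
    rw [← Complex.ofReal_exp, Real.exp_log hr]
  have h2 : Complex.exp (((Real.log r : ℝ) : ℂ) / 2) = ((Real.sqrt r : ℝ) : ℂ) := by
    rw [show ((Real.log r : ℝ) : ℂ) / 2 = ((Real.log r / 2 : ℝ) : ℂ) by push_cast; ring,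
      ← Complex.ofReal_exp]
    congr 1
    rw [← Real.exp_log hr, sqrt_exp', Real.exp_log hr]
  rw [hG] at hkey
  simp only [h1, h2] at hkey
  have h3 : ‖Complex.exp (2 * (a : ℂ) * ((Real.sqrt r : ℝ) : ℂ))‖ = Real.exp (2 * a * Real.sqrt r) := by
    rw [show (2 * (a : ℂ) * ((Real.sqrt r : ℝ) : ℂ)) = ((2 * a * Real.sqrt r : ℝ) : ℂ) by push_cast; ring]
    rw [Complex.norm_exp, Complex.ofReal_re]
  rw [norm_mul, h3] at hkey
  calc ‖h (v - (r : ℂ))‖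
      = (‖h (v - (r : ℂ))‖ * Real.exp (2 * a * Real.sqrt r)) * Real.exp (-(2 * a * Real.sqrt r)) := by
        rw [mul_assoc, ← Real.exp_add]
        simp
    _ ≤ C * Real.exp (-(2 * a * Real.sqrt r)) :=
        mul_le_mul_of_nonneg_right hkey (Real.exp_pos _).le
    _ = C * Real.exp (-2 * Real.sqrt r * a) := by ring_nf
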